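/- Let H ∈ (1/2, 1) and let a, b > 0. Then lim_{R→∞} R^{−2H}·H·(2H−1)·∫_{ℝ²} φ_{a,R}(y)·φ_{b,R}(z)·|y−z|^{2H−2} dy dz = 2^{2H}·a·b. -/

import Mathlib

open MeasureTheory Real intervalIntegral Filter Topology

/-- `φ_{a,R}(y) = (1/2) ∫_{-R}^R 1_{|x-y|≤a} dx`. -/
noncomputable def phi (a R y : ℝ) : ℝ :=
  (1/2) * ∫ x in (-R)..R, if |x - y| ≤ a then (1:ℝ) else 0

lemma vol_Ioc_inter_Icc (l r c d : ℝ) :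
    volume (Set.Ioc l r ∩ Set.Icc c d) = ENNReal.ofReal (min r d - max l c) := by
  rcases le_or_gt (max l c) (min r d) with h | h
  · apply le_antisymm
    · calc volume (Set.Ioc l r ∩ Set.Icc c d) ≤ volume (Set.Icc (max l c) (min r d)) := by
            apply measure_mono
            rintro x ⟨⟨h1, h2⟩, h3, h4⟩
            exact ⟨max_le h1.le h3, le_min h2 h4⟩
        _ = ENNReal.ofReal (min r d - max l c) := Real.volume_Icc
    · calc ENNReal.ofReal (min r d - max l c) = volume (Set.Ioc (max l c) (min r d)) :=
            Real.volume_Ioc.symm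
        _ ≤ volume (Set.Ioc l r ∩ Set.Icc c d) := by
            apply measure_mono
            rintro x ⟨h1, h2⟩
            exact ⟨⟨lt_of_le_of_lt (le_max_left l c) h1, h2.trans (min_le_left r d)⟩,
              ((le_max_right l c).trans h1.le), h2.trans (min_le_right r d)⟩
  · have h0 : min r d - max l c ≤ 0 := by linarith
    rw [ENNReal.ofReal_of_nonpos h0]
    convert measure_empty (μ := volume) (α := ℝ)
    ext x
    simp only [Set.mem_inter_iff, Set.mem_Ioc, Set.mem_Icc, Set.mem_empty_iff_false, iff_false]
    rintro ⟨⟨h1, h2⟩, h3, h4⟩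
    have : max l c ≤ x := max_le h1.le h3
    have : x ≤ min r d := le_min h2 h4
    linarith

lemma phi_eq (a R y : ℝ) (hR : 0 ≤ R) :
    phi a R y = (1/2) * max 0 (min R (y + a) - max (-R) (y - a)) := by
  unfold phi
  congr 1
  have h1 : ∀ x : ℝ, (if |x - y| ≤ a then (1:ℝ) else 0)
      = Set.indicator (Set.Icc (y - a) (y + a)) (fun _ => (1:ℝ)) x := by
    intro x
    rw [Set.indicator_apply]
    have : |x - y| ≤ a ↔ x ∈ Set.Icc (y - a) (y + a) := by
      rw [Set.mem_Icc, abs_le]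
      constructor <;> intro h <;> exact ⟨by linarith [h.1, h.2], by linarith [h.1, h.2]⟩
    simp [this]
  rw [intervalIntegral.integral_of_le (by linarith : -R ≤ R)]
  simp_rw [h1]
  rw [MeasureTheory.setIntegral_indicator measurableSet_Icc, MeasureTheory.setIntegral_const,
    Measure.real, vol_Ioc_inter_Icc]
  have : ENNReal.ofReal (min R (y + a) - max (-R) (y - a))
      = ENNReal.ofReal (max 0 (min R (y + a) - max (-R) (y - a))) := by
    rcases le_total 0 (min R (y + a) - max (-R) (y - a)) with h | h
    · rw [max_eq_right h]
    · rw [max_eq_left h, ENNReal.ofReal_of_nonpos h, ENNReal.ofReal_zero]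
  rw [this, ENNReal.toReal_ofReal (le_max_left _ _), smul_eq_mul, mul_one]

lemma intervalIntegrable_abs_rpow {r : ℝ} (hr : -1 < r) (c d : ℝ) :
    IntervalIntegrable (fun x : ℝ => |x| ^ r) volume c d := by
  have key : ∀ t : ℝ, 0 ≤ t → IntervalIntegrable (fun x : ℝ => |x| ^ r) volume 0 t := by
    intro t ht
    apply (intervalIntegral.intervalIntegrable_rpow' hr (a := 0) (b := t)).congr
    have : Set.uIoc (0:ℝ) t = Set.Ioc 0 t := Set.uIoc_of_le ht
    intro x hx
    rw [this] at hx
    simp only [abs_of_pos hx.1]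
  have all : ∀ t : ℝ, IntervalIntegrable (fun x : ℝ => |x| ^ r) volume 0 t := by
    intro t
    rcases le_or_gt 0 t with ht | ht
    · exact key t ht
    · have h2 := ((IntervalIntegrable.iff_comp_neg (by simp)).mp (key (-t) (by linarith)))
      simp only [abs_neg, neg_zero, neg_neg] at h2
      exact h2
  exact (all c).symm.trans (all d)

lemma intervalIntegrable_abs_sub_rpow {r : ℝ} (hr : -1 < r) (u c d : ℝ) :
    IntervalIntegrable (fun v : ℝ => |u - v| ^ r) volume c d := by
  have := (intervalIntegrable_abs_rpow hr (u - c) (u - d)).comp_sub_left u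
  simpa using this

lemma integral_abs_rpow_right {r : ℝ} (hr : -1 < r) {t : ℝ} (ht : 0 ≤ t) :
    ∫ w in (0:ℝ)..t, |w| ^ r = t ^ (r + 1) / (r + 1) := by
  have : ∫ w in (0:ℝ)..t, |w| ^ r = ∫ w in (0:ℝ)..t, w ^ r := by
    apply intervalIntegral.integral_congr
    intro x hx
    rw [Set.uIcc_of_le ht] at hx
    rcases eq_or_lt_of_le hx.1 with h | h
    · simp [← h]
    · simp only [abs_of_pos h]
  rw [this, integral_rpow (Or.inl hr), Real.zero_rpow (by linarith), sub_zero]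

lemma integral_abs_rpow_left {r : ℝ} (hr : -1 < r) {t : ℝ} (ht : 0 ≤ t) :
    ∫ w in (-t)..(0:ℝ), |w| ^ r = t ^ (r + 1) / (r + 1) := by
  have h := intervalIntegral.integral_comp_neg (a := -t) (b := 0) (fun w : ℝ => |w| ^ r)
  simp only [abs_neg, neg_zero, neg_neg] at h
  rw [h, integral_abs_rpow_right hr ht]

lemma integral_abs_rpow_two {r : ℝ} (hr : -1 < r) {t : ℝ} (ht : 0 ≤ t) :
    ∫ w in (-t)..t, |w| ^ r = 2 * t ^ (r + 1) / (r + 1) := by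
  rw [← intervalIntegral.integral_add_adjacent_intervals (b := (0:ℝ))
    (intervalIntegrable_abs_rpow hr _ _) (intervalIntegrable_abs_rpow hr _ _),
    integral_abs_rpow_left hr ht, integral_abs_rpow_right hr ht]
  ring

lemma phi_nonneg {a : ℝ} (R y : ℝ) (hR : 0 ≤ R) : 0 ≤ phi a R y := by
  rw [phi_eq a R y hR]
  have := le_max_left (0:ℝ) (min R (y + a) - max (-R) (y - a))
  linarith

lemma phi_le {a : ℝ} (R y : ℝ) (ha : 0 ≤ a) (hR : 0 ≤ R) : phi a R y ≤ a := by
  rw [phi_eq a R y hR]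
  have h1 : min R (y + a) ≤ y + a := min_le_right _ _
  have h2 : y - a ≤ max (-R) (y - a) := le_max_right _ _
  have : max 0 (min R (y + a) - max (-R) (y - a)) ≤ 2 * a := max_le (by linarith) (by linarith)
  linarith

lemma phi_eq_const {a R y : ℝ} (ha : 0 ≤ a) (h1 : -R ≤ y - a) (h2 : y + a ≤ R) :
    phi a R y = a := by
  have hR : 0 ≤ R := by linarith
  rw [phi_eq a R y hR, min_eq_right h2, max_eq_right h1,
    show y + a - (y - a) = 2 * a by ring, max_eq_right (by linarith : (0:ℝ) ≤ 2 * a)]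
  ring

lemma phi_eq_zero {a R y : ℝ} (ha : 0 ≤ a) (hR : 0 ≤ R) (h : R + a < |y|) :
    phi a R y = 0 := by
  rw [phi_eq a R y hR]
  have h1 : min R (y + a) - max (-R) (y - a) ≤ 0 := by
    rcases le_or_gt 0 y with hy | hy
    · rw [abs_of_nonneg hy] at h
      have := min_le_left R (y + a)
      have := le_max_right (-R) (y - a)
      linarith
    · rw [abs_of_neg hy] at h
      have := min_le_right R (y + a)
      have := le_max_left (-R) (y - a)
      linarith
  rw [max_eq_left h1]
  ring

lemma phi_continuous (a R : ℝ) (hR : 0 ≤ R) : Continuous fun y => phi a R y := by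
  have : (fun y => phi a R y) = fun y => (1/2) * max 0 (min R (y + a) - max (-R) (y - a)) := by
    funext y; exact phi_eq a R y hR
  rw [this]
  fun_prop

lemma scaling (H a b R : ℝ) (hR : 0 < R) :
    R ^ (-(2 * H)) * (H * (2 * H - 1)) *
      ∫ y : ℝ, ∫ z : ℝ, phi a R y * phi b R z * |y - z| ^ (2 * H - 2)
    = (H * (2 * H - 1)) *
      ∫ u : ℝ, ∫ v : ℝ, phi a R (R * u) * phi b R (R * v) * |u - v| ^ (2 * H - 2) := by
  have hRne : R ≠ 0 := hR.ne'
  have sub1 : ∀ g : ℝ → ℝ, (∫ y : ℝ, g y) = R * ∫ u : ℝ, g (R * u) := by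
    intro g
    have h := MeasureTheory.Measure.integral_comp_mul_left g R
    rw [abs_inv, abs_of_pos hR, smul_eq_mul] at h
    rw [h, ← mul_assoc, mul_inv_cancel₀ hRne, one_mul]
  have inner : ∀ y : ℝ, (∫ z : ℝ, phi a R y * phi b R z * |y - z| ^ (2 * H - 2))
      = R * ∫ v : ℝ, phi a R y * phi b R (R * v) * |y - R * v| ^ (2 * H - 2) :=
    fun y => sub1 _
  have e1 : (∫ y : ℝ, ∫ z : ℝ, phi a R y * phi b R z * |y - z| ^ (2 * H - 2))
      = ∫ y : ℝ, R * ∫ v : ℝ, phi a R y * phi b R (R * v) * |y - R * v| ^ (2 * H - 2) :=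
    MeasureTheory.integral_congr_ae (Filter.Eventually.of_forall inner)
  rw [e1, sub1 (fun y => R * ∫ v : ℝ, phi a R y * phi b R (R * v) * |y - R * v| ^ (2 * H - 2))]
  have key : ∀ u v : ℝ, |R * u - R * v| ^ (2 * H - 2)
      = R ^ (2 * H - 2) * |u - v| ^ (2 * H - 2) := by
    intro u v
    rw [show R * u - R * v = R * (u - v) by ring, abs_mul, abs_of_pos hR,
      Real.mul_rpow hR.le (abs_nonneg _)]
  simp_rw [key]
  have e2 : ∀ u : ℝ, (∫ v : ℝ, phi a R (R * u) * phi b R (R * v) *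
        (R ^ (2 * H - 2) * |u - v| ^ (2 * H - 2)))
      = R ^ (2 * H - 2) * ∫ v : ℝ, phi a R (R * u) * phi b R (R * v) * |u - v| ^ (2 * H - 2) := by
    intro u
    rw [← MeasureTheory.integral_const_mul]
    congr 1
    funext v
    ring
  simp_rw [e2, MeasureTheory.integral_const_mul]
  have hpow : R ^ (-(2 * H)) * (R * (R * R ^ (2 * H - 2))) = 1 := by
    rw [show (R : ℝ) * (R * R ^ (2 * H - 2))
        = R ^ (1:ℝ) * (R ^ (1:ℝ) * R ^ (2 * H - 2)) by rw [Real.rpow_one],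
      ← Real.rpow_add hR, ← Real.rpow_add hR, ← Real.rpow_add hR,
      show -(2 * H) + (1 + (1 + (2 * H - 2))) = 0 by ring, Real.rpow_zero]
  set J := ∫ u : ℝ, ∫ v : ℝ, phi a R (R * u) * phi b R (R * v) * |u - v| ^ (2 * H - 2)
  calc R ^ (-(2 * H)) * (H * (2 * H - 1)) * (R * (R * (R ^ (2 * H - 2) * J)))
      = (R ^ (-(2 * H)) * (R * (R * R ^ (2 * H - 2)))) * ((H * (2 * H - 1)) * J) := by ring
    _ = (H * (2 * H - 1)) * J := by rw [hpow, one_mul]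

/-- eventually `phi b R (R*v) = b` when `|v| < 1`. -/
lemma phi_eventually_const {b v : ℝ} (hb : 0 < b) (hv : |v| < 1) :
    ∀ᶠ R in atTop, phi b R (R * v) = b := by
  rw [abs_lt] at hv
  have h1 : Tendsto (fun R : ℝ => R * (1 + v)) atTop atTop :=
    Tendsto.atTop_mul_const (by linarith) tendsto_id
  have h2 : Tendsto (fun R : ℝ => R * (1 - v)) atTop atTop :=
    Tendsto.atTop_mul_const (by linarith) tendsto_id
  filter_upwards [h1.eventually_ge_atTop b, h2.eventually_ge_atTop b] with R hR1 hR2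
  have e1 : R * (1 + v) = R + R * v := by ring
  have e2 : R * (1 - v) = R - R * v := by ring
  exact phi_eq_const hb.le (by linarith) (by linarith)

/-- eventually `phi b R (R*v) = 0` when `|v| > 1`. -/
lemma phi_eventually_zero {b v : ℝ} (hb : 0 < b) (hv : 1 < |v|) :
    ∀ᶠ R in atTop, phi b R (R * v) = 0 := by
  have h1 : Tendsto (fun R : ℝ => R * (|v| - 1)) atTop atTop :=
    Tendsto.atTop_mul_const (by linarith) tendsto_id
  filter_upwards [h1.eventually_gt_atTop b, eventually_ge_atTop (0:ℝ)] with R hR1 hR2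
  apply phi_eq_zero hb.le hR2
  rw [abs_mul, abs_of_nonneg hR2]
  nlinarith [hR1]

lemma ae_ne_pm_one : ∀ᵐ v : ℝ, v ∉ ({-1, 1} : Set ℝ) := by
  rw [← MeasureTheory.measure_eq_zero_iff_ae_notMem]
  exact Set.Finite.measure_zero (Set.toFinite _) volume

lemma abs_cases_of_ne {v : ℝ} (hv : v ∉ ({-1, 1} : Set ℝ)) : |v| < 1 ∨ 1 < |v| := by
  rcases lt_or_ge (|v|) 1 with h | h
  · exact Or.inl h
  · rcases eq_or_lt_of_le h with h' | h'
    · exfalso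
      rcases abs_eq (by norm_num : (0:ℝ) ≤ 1) |>.mp h'.symm with h2 | h2
      · exact hv (Or.inr h2)
      · exact hv (Or.inl h2)
    · exact Or.inr h'

lemma inner_tendsto (H a b : ℝ) (hH1 : 1/2 < H) (hH2 : H < 1) (ha : 0 < a) (hb : 0 < b)
    (u : ℝ) :
    Tendsto (fun R => ∫ v : ℝ, a * phi b R (R * v) * |u - v| ^ (2 * H - 2)) atTop
      (𝓝 (∫ v : ℝ, Set.indicator (Set.Ioo (-1:ℝ) 1)
        (fun v => a * b * |u - v| ^ (2 * H - 2)) v)) := by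
  have hr : (-1:ℝ) < 2 * H - 2 := by linarith
  apply MeasureTheory.tendsto_integral_filter_of_dominated_convergence
    (bound := Set.indicator (Set.Icc (-(1+b)) (1+b)) (fun v => a * b * |u - v| ^ (2 * H - 2)))
  · filter_upwards [eventually_ge_atTop (0:ℝ)] with R hR
    have m1 : Measurable fun v : ℝ => phi b R (R * v) :=
      ((phi_continuous b R hR).comp (continuous_const.mul continuous_id)).measurable
    have m2 : Measurable fun v : ℝ => |u - v| ^ (2 * H - 2) := by fun_prop
    exact ((measurable_const.mul m1).mul m2).aestronglyMeasurable
  · filter_upwards [eventually_ge_atTop (1:ℝ)] with R hR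
    apply Filter.Eventually.of_forall
    intro v
    rcases le_or_gt (|v|) (1 + b) with hv | hv
    · rw [Set.indicator_of_mem (by rw [Set.mem_Icc, ← abs_le]; exact hv)]
      have hp1 : 0 ≤ phi b R (R * v) := phi_nonneg _ _ (by linarith)
      have hp2 : phi b R (R * v) ≤ b := phi_le _ _ hb.le (by linarith)
      have hk : 0 ≤ |u - v| ^ (2 * H - 2) := Real.rpow_nonneg (abs_nonneg _) _
      rw [Real.norm_eq_abs, abs_of_nonneg (by positivity)]
      gcongr
    · have hz : phi b R (R * v) = 0 := by
        apply phi_eq_zero hb.le (by linarith)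
        rw [abs_mul, abs_of_nonneg (by linarith : (0:ℝ) ≤ R)]
        nlinarith
      rw [hz, Set.indicator_of_notMem (by rw [Set.mem_Icc, ← abs_le]; exact not_le.2 hv)]
      simp
  · rw [MeasureTheory.integrable_indicator_iff measurableSet_Icc]
    have : IntegrableOn (fun v : ℝ => |u - v| ^ (2 * H - 2)) (Set.Icc (-(1+b)) (1+b)) volume :=
      (intervalIntegrable_iff_integrableOn_Icc_of_le (by linarith)).mp
        (intervalIntegrable_abs_sub_rpow hr u _ _)
    exact this.const_mul (a * b)
  · filter_upwards [ae_ne_pm_one] with v hv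
    rcases abs_cases_of_ne hv with h | h
    · apply Tendsto.congr' ?_ tendsto_const_nhds
      filter_upwards [phi_eventually_const hb h] with R hR
      rw [hR, Set.indicator_of_mem (by rw [Set.mem_Ioo]; rw [abs_lt] at h; exact h)]
    · apply Tendsto.congr' ?_ tendsto_const_nhds
      filter_upwards [phi_eventually_zero hb h] with R hR
      rw [hR, Set.indicator_of_notMem ?_]
      · ring
      · rw [Set.mem_Ioo, ← abs_lt]
        exact not_lt.2 h.le

lemma kernel_int_le (H a b u : ℝ) (hH1 : 1/2 < H) (ha : 0 < a) (hb : 0 < b)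
    (hu : |u| ≤ 1 + a) :
    ∫ v in Set.Icc (-(1+b)) (1+b), |u - v| ^ (2*H-2)
      ≤ 2 * (2+a+b) ^ (2*H-1) / (2*H-1) := by
  have hr : (-1:ℝ) < 2*H-2 := by linarith
  obtain ⟨hu1, hu2⟩ := abs_le.mp hu
  have hsub : Set.Icc (-(1+b)) (1+b) ⊆ Set.Icc (u-(2+a+b)) (u+(2+a+b)) := by
    intro v hv
    rw [Set.mem_Icc] at hv ⊢
    constructor <;> linarith [hv.1, hv.2]
  have hint : IntegrableOn (fun v : ℝ => |u - v| ^ (2*H-2))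
      (Set.Icc (u-(2+a+b)) (u+(2+a+b))) volume :=
    (intervalIntegrable_iff_integrableOn_Icc_of_le (by linarith)).mp
      (intervalIntegrable_abs_sub_rpow hr u _ _)
  calc ∫ v in Set.Icc (-(1+b)) (1+b), |u - v| ^ (2*H-2)
      ≤ ∫ v in Set.Icc (u-(2+a+b)) (u+(2+a+b)), |u - v| ^ (2*H-2) :=
        setIntegral_mono_set hint
          (Filter.Eventually.of_forall fun v => Real.rpow_nonneg (abs_nonneg _) _)
          (HasSubset.Subset.eventuallyLE hsub)
    _ = ∫ v in (u-(2+a+b))..(u+(2+a+b)), |u - v| ^ (2*H-2) := by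
        rw [MeasureTheory.integral_Icc_eq_integral_Ioc,
          ← intervalIntegral.integral_of_le (by linarith)]
    _ = ∫ w in (u-(u+(2+a+b)))..(u-(u-(2+a+b))), |w| ^ (2*H-2) :=
        intervalIntegral.integral_comp_sub_left (fun w => |w| ^ (2*H-2)) u
    _ = 2 * (2+a+b) ^ (2*H-1) / (2*H-1) := by
        rw [show u-(u+(2+a+b)) = -(2+a+b) by ring, show u-(u-(2+a+b)) = 2+a+b by ring]
        have h2 := integral_abs_rpow_two hr (t := 2+a+b) (by linarith)
        rw [show 2*H-2+1 = 2*H-1 by ring] at h2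
        exact h2

lemma outer_tendsto (H a b : ℝ) (hH1 : 1/2 < H) (hH2 : H < 1) (ha : 0 < a) (hb : 0 < b) :
    Tendsto (fun R => ∫ u : ℝ, ∫ v : ℝ,
        phi a R (R * u) * phi b R (R * v) * |u - v| ^ (2 * H - 2)) atTop
      (𝓝 (∫ u : ℝ, Set.indicator (Set.Ioo (-1:ℝ) 1)
        (fun u => ∫ v : ℝ, Set.indicator (Set.Ioo (-1:ℝ) 1)
          (fun v => a * b * |u - v| ^ (2 * H - 2)) v) u)) := by
  have hr : (-1:ℝ) < 2 * H - 2 := by linarith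
  apply MeasureTheory.tendsto_integral_filter_of_dominated_convergence
    (bound := Set.indicator (Set.Icc (-(1+a)) (1+a))
      (fun _ => a * b * (2 * (2+a+b) ^ (2*H-1) / (2*H-1))))
  · filter_upwards [eventually_ge_atTop (0:ℝ)] with R hR
    have m1 : Measurable fun p : ℝ × ℝ => phi a R (R * p.1) :=
      ((phi_continuous a R hR).comp (continuous_const.mul continuous_fst)).measurable
    have m2 : Measurable fun p : ℝ × ℝ => phi b R (R * p.2) :=
      ((phi_continuous b R hR).comp (continuous_const.mul continuous_snd)).measurable
    have m3 : Measurable fun p : ℝ × ℝ => |p.1 - p.2| ^ (2 * H - 2) := by fun_prop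
    exact (((m1.mul m2).mul m3).stronglyMeasurable.integral_prod_right').aestronglyMeasurable
  · filter_upwards [eventually_ge_atTop (1:ℝ)] with R hR
    apply Filter.Eventually.of_forall
    intro u
    have hR0 : (0:ℝ) ≤ R := by linarith
    rcases le_or_gt (|u|) (1 + a) with hu | hu
    · rw [Set.indicator_of_mem (by rw [Set.mem_Icc, ← abs_le]; exact hu)]
      calc ‖∫ v : ℝ, phi a R (R * u) * phi b R (R * v) * |u - v| ^ (2 * H - 2)‖
          ≤ ∫ v : ℝ, ‖phi a R (R * u) * phi b R (R * v) * |u - v| ^ (2 * H - 2)‖ :=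
            MeasureTheory.norm_integral_le_integral_norm _
        _ ≤ ∫ v : ℝ, Set.indicator (Set.Icc (-(1+b)) (1+b))
              (fun v => a * b * |u - v| ^ (2 * H - 2)) v := by
            apply MeasureTheory.integral_mono_of_nonneg
              (Filter.Eventually.of_forall fun v => norm_nonneg _)
            · rw [MeasureTheory.integrable_indicator_iff measurableSet_Icc]
              exact ((intervalIntegrable_iff_integrableOn_Icc_of_le (by linarith)).mp
                (intervalIntegrable_abs_sub_rpow hr u _ _)).const_mul (a * b)
            · apply Filter.Eventually.of_forall
              intro v
              dsimp only
              rcases le_or_gt (|v|) (1 + b) with hv | hv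
              · rw [Set.indicator_of_mem (by rw [Set.mem_Icc, ← abs_le]; exact hv)]
                have hp1 : 0 ≤ phi a R (R * u) := phi_nonneg _ _ hR0
                have hp2 : phi a R (R * u) ≤ a := phi_le _ _ ha.le hR0
                have hp3 : 0 ≤ phi b R (R * v) := phi_nonneg _ _ hR0
                have hp4 : phi b R (R * v) ≤ b := phi_le _ _ hb.le hR0
                have hk : 0 ≤ |u - v| ^ (2 * H - 2) := Real.rpow_nonneg (abs_nonneg _) _
                rw [Real.norm_eq_abs, abs_of_nonneg (by positivity)]
                gcongr
              · have hz : phi b R (R * v) = 0 := by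
                  apply phi_eq_zero hb.le hR0
                  rw [abs_mul, abs_of_nonneg hR0]
                  nlinarith
                rw [hz, Set.indicator_of_notMem
                  (by rw [Set.mem_Icc, ← abs_le]; exact not_le.2 hv)]
                simp
        _ = a * b * ∫ v in Set.Icc (-(1+b)) (1+b), |u - v| ^ (2 * H - 2) := by
            rw [MeasureTheory.integral_indicator measurableSet_Icc,
              MeasureTheory.integral_const_mul]
        _ ≤ a * b * (2 * (2+a+b) ^ (2*H-1) / (2*H-1)) :=
            mul_le_mul_of_nonneg_left (kernel_int_le H a b u hH1 ha hb hu) (by positivity)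
    · have hz : phi a R (R * u) = 0 := by
        apply phi_eq_zero ha.le hR0
        rw [abs_mul, abs_of_nonneg hR0]
        nlinarith
      simp only [hz, zero_mul, MeasureTheory.integral_zero]
      rw [Set.indicator_of_notMem (by rw [Set.mem_Icc, ← abs_le]; exact not_le.2 hu)]
      simp
  · rw [MeasureTheory.integrable_indicator_iff measurableSet_Icc]
    exact MeasureTheory.integrableOn_const measure_Icc_lt_top.ne
  · filter_upwards [ae_ne_pm_one] with u hu
    rcases abs_cases_of_ne hu with h | h
    · have heq : (fun R => ∫ v : ℝ, a * phi b R (R * v) * |u - v| ^ (2 * H - 2))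
          =ᶠ[atTop] fun R => ∫ v : ℝ,
            phi a R (R * u) * phi b R (R * v) * |u - v| ^ (2 * H - 2) := by
        filter_upwards [phi_eventually_const ha h] with R hR
        rw [hR]
      have hval : Set.indicator (Set.Ioo (-1:ℝ) 1)
          (fun u => ∫ v : ℝ, Set.indicator (Set.Ioo (-1:ℝ) 1)
            (fun v => a * b * |u - v| ^ (2 * H - 2)) v) u
          = ∫ v : ℝ, Set.indicator (Set.Ioo (-1:ℝ) 1)
            (fun v => a * b * |u - v| ^ (2 * H - 2)) v := by
        rw [Set.indicator_of_mem (by rw [Set.mem_Ioo]; rw [abs_lt] at h; exact h)]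
      rw [hval]
      exact Tendsto.congr' heq (inner_tendsto H a b hH1 hH2 ha hb u)
    · apply Tendsto.congr' ?_ tendsto_const_nhds
      filter_upwards [phi_eventually_zero ha h] with R hR
      simp only [hR, zero_mul, MeasureTheory.integral_zero]
      rw [Set.indicator_of_notMem (by rw [Set.mem_Ioo, ← abs_lt]; exact not_lt.2 h.le)]

lemma Lval_eq (H a b : ℝ) (hH1 : 1/2 < H) (hH2 : H < 1) :
    ∫ u : ℝ, Set.indicator (Set.Ioo (-1:ℝ) 1)
      (fun u => ∫ v : ℝ, Set.indicator (Set.Ioo (-1:ℝ) 1)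
        (fun v => a * b * |u - v| ^ (2 * H - 2)) v) u
    = a * b * (2 ^ (2 * H) / (H * (2 * H - 1))) := by
  have hr : (-1:ℝ) < 2 * H - 2 := by linarith
  have hH0 : (0:ℝ) < H := by linarith
  have hH21 : (0:ℝ) < 2 * H - 1 := by linarith
  rw [MeasureTheory.integral_indicator measurableSet_Ioo]
  have hgu : Set.EqOn
      (fun u : ℝ => ∫ v : ℝ, Set.indicator (Set.Ioo (-1:ℝ) 1)
        (fun v => a * b * |u - v| ^ (2 * H - 2)) v)
      (fun u : ℝ => a * b * (((1 - u) ^ (2 * H - 1) + (1 + u) ^ (2 * H - 1)) / (2 * H - 1)))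
      (Set.Ioo (-1:ℝ) 1) := by
    intro u hu
    rw [Set.mem_Ioo] at hu
    dsimp only
    rw [MeasureTheory.integral_indicator measurableSet_Ioo,
      ← MeasureTheory.integral_Ioc_eq_integral_Ioo,
      ← intervalIntegral.integral_of_le (by linarith : (-1:ℝ) ≤ 1),
      intervalIntegral.integral_const_mul,
      intervalIntegral.integral_comp_sub_left (fun w => |w| ^ (2 * H - 2)) u,
      ← intervalIntegral.integral_add_adjacent_intervals (a := u - 1) (b := (0:ℝ))
        (c := u - -1) (intervalIntegrable_abs_rpow hr _ _) (intervalIntegrable_abs_rpow hr _ _),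
      show u - 1 = -(1 - u) by ring, integral_abs_rpow_left hr (by linarith : (0:ℝ) ≤ 1 - u),
      show u - -1 = u + 1 by ring, integral_abs_rpow_right hr (by linarith : (0:ℝ) ≤ u + 1),
      show 2 * H - 2 + 1 = 2 * H - 1 by ring]
    ring_nf
  rw [MeasureTheory.setIntegral_congr_fun measurableSet_Ioo hgu,
    ← MeasureTheory.integral_Ioc_eq_integral_Ioo,
    ← intervalIntegral.integral_of_le (by linarith : (-1:ℝ) ≤ 1)]
  have split : ∀ u : ℝ, a * b * (((1 - u) ^ (2 * H - 1) + (1 + u) ^ (2 * H - 1)) / (2 * H - 1))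
      = (a * b / (2 * H - 1)) * ((1 - u) ^ (2 * H - 1) + (1 + u) ^ (2 * H - 1)) := by
    intro u; ring
  simp_rw [split]
  rw [intervalIntegral.integral_const_mul]
  have hr' : (-1:ℝ) < 2 * H - 1 := by linarith
  have i1 : IntervalIntegrable (fun u : ℝ => (1 - u) ^ (2 * H - 1)) volume (-1) 1 := by
    have := (intervalIntegral.intervalIntegrable_rpow' hr' (a := 2) (b := 0)).comp_sub_left 1
    norm_num at this
    exact this
  have i2 : IntervalIntegrable (fun u : ℝ => (1 + u) ^ (2 * H - 1)) volume (-1) 1 := by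
    have := (intervalIntegral.intervalIntegrable_rpow' hr' (a := 0) (b := 2)).comp_add_left 1
    norm_num at this
    exact this
  rw [intervalIntegral.integral_add i1 i2,
    intervalIntegral.integral_comp_sub_left (fun w => w ^ (2 * H - 1)) 1,
    intervalIntegral.integral_comp_add_left (fun w => w ^ (2 * H - 1)) 1,
    show (1:ℝ) - 1 = 0 by ring, show (1:ℝ) - -1 = 2 by ring,
    show (1:ℝ) + -1 = 0 by ring, show (1:ℝ) + 1 = 2 by ring,
    integral_rpow (Or.inl hr'), Real.zero_rpow (by linarith : 2 * H - 1 + 1 ≠ 0),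
    show 2 * H - 1 + 1 = 2 * H by ring]
  have h2H : (2:ℝ) * H ≠ 0 := by linarith
  field_simp
  ring

/-- For `H ∈ (1/2,1)` and `a, b > 0`:
`lim_{R→∞} R^{-2H} H(2H-1) ∬ φ_{a,R}(y) φ_{b,R}(z) |y-z|^{2H-2} dy dz = 2^{2H} a b`. -/
theorem stmt_8 (H : ℝ) (hH : H ∈ Set.Ioo (1/2 : ℝ) 1) (a b : ℝ) (ha : 0 < a) (hb : 0 < b) :
    Tendsto (fun R : ℝ =>
        R ^ (-(2 * H)) * (H * (2 * H - 1)) *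
          ∫ y : ℝ, ∫ z : ℝ, phi a R y * phi b R z * |y - z| ^ (2 * H - 2))
      atTop (𝓝 ((2 : ℝ) ^ (2 * H) * a * b)) := by
  obtain ⟨hH1, hH2⟩ := hH
  have hH21 : (0:ℝ) < 2 * H - 1 := by linarith
  have hH0 : (0:ℝ) < H := by linarith
  have main := (outer_tendsto H a b hH1 hH2 ha hb).const_mul (H * (2 * H - 1))
  rw [Lval_eq H a b hH1 hH2] at main
  have hval : (H * (2 * H - 1)) * (a * b * (2 ^ (2 * H) / (H * (2 * H - 1))))
      = (2:ℝ) ^ (2 * H) * a * b := by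
    have hne : H * (2 * H - 1) ≠ 0 := by positivity
    rw [show (H * (2 * H - 1)) * (a * b * (2 ^ (2 * H) / (H * (2 * H - 1))))
        = (2:ℝ) ^ (2 * H) * a * b * ((H * (2 * H - 1)) / (H * (2 * H - 1))) by ring,
      div_self hne, mul_one]
  rw [hval] at main
  apply Tendsto.congr' ?_ main
  filter_upwards [eventually_gt_atTop (0:ℝ)] with R hR
  exact (scaling H a b R hR).symm
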